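/- arXiv:1705.01883 — 4 statements merged into one kernel-verified Lean document; each statement's English description precedes it below -/
import Mathlib

section
/- Let V = {v₁, …, v_k} be a finite set of nonzero vectors in ℝⁿ with all coordinates nonnegative, and let D_V = {a₁v₁ + ⋯ + a_k v_k : aᵢ ∈ ℕ, not all zero}. Call a function f : D_V → ℝ admissible if f(u + w) > max(f(u), f(w)) for all u, w ∈ D_V and the preimage under f of every interval (−∞, x) is finite. For an admissible f, define the f-Ulam set A_f(V) ⊆ D_V by: every v ∈ V lies in A_f(V), and a vector x ∈ D_V with x ∉ V lies in A_f(V) if and only if there is exactly one unordered pair {u, w} with u, w ∈ A_f(V), u ≠ w, f(u) < f(x), f(w) < f(x), and u + w = x. Then for any two admissible functions f₁ and f₂, the sets A_{f₁}(V) and A_{f₂}(V) are equal. -/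
/-- Exactly one unordered pair `{u, w}` of distinct elements of `A` sums to `x`. -/
def UlamUniqueRep {α : Type*} [Add α] (A : Set α) (x : α) : Prop :=
  ∃ u w, u ∈ A ∧ w ∈ A ∧ u ≠ w ∧ u + w = x ∧
    ∀ u' w', u' ∈ A → w' ∈ A → u' ≠ w' → u' + w' = x →
      (u' = u ∧ w' = w) ∨ (u' = w ∧ w' = u)

/-- `A` is the Ulam set with initial set `V`: every element of `V` lies in `A`, and a
vector not in `V` lies in `A` iff exactly one unordered pair of distinct elements of `A`
sums to it. -/
def IsUlamSet {α : Type*} [Add α] (V A : Set α) : Prop :=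
  V ⊆ A ∧ ∀ x, x ∉ V → (x ∈ A ↔ UlamUniqueRep A x)

/-- `A` is the `f`-Ulam set inside the domain `D` with initial set `V`: `A ⊆ D`,
every element of `V` lies in `A`, and an element `x ∈ D` not in `V` lies in `A` iff
exactly one unordered pair of distinct elements of `A`, each `f`-smaller than `x`,
sums to `x`. -/
def IsFUlamSet {α : Type*} [Add α] (D V : Set α) (f : α → ℝ) (A : Set α) : Prop :=
  A ⊆ D ∧ V ⊆ A ∧ ∀ x ∈ D, x ∉ V →
    (x ∈ A ↔ ∃ u w, u ∈ A ∧ w ∈ A ∧ u ≠ w ∧ f u < f x ∧ f w < f x ∧ u + w = x ∧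
      ∀ u' w', u' ∈ A → w' ∈ A → u' ≠ w' → f u' < f x → f w' < f x → u' + w' = x →
        (u' = u ∧ w' = w) ∨ (u' = w ∧ w' = u))

lemma ulam_step {α : Type*} [Add α] {D V A₁ A₂ : Set α} {f₁ f₂ : α → ℝ}
    (hmax₁ : ∀ u ∈ D, ∀ w ∈ D, max (f₁ u) (f₁ w) < f₁ (u + w))
    (hmax₂ : ∀ u ∈ D, ∀ w ∈ D, max (f₂ u) (f₂ w) < f₂ (u + w))
    (h₁ : IsFUlamSet D V f₁ A₁) (h₂ : IsFUlamSet D V f₂ A₂)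
    {x : α} (hxD : x ∈ D)
    (IH : ∀ y ∈ D, f₁ y < f₁ x → (y ∈ A₁ ↔ y ∈ A₂)) :
    x ∈ A₁ ↔ x ∈ A₂ := by
  obtain ⟨hA₁D, hVA₁, hiff₁⟩ := h₁
  obtain ⟨hA₂D, hVA₂, hiff₂⟩ := h₂
  by_cases hxV : x ∈ V
  · exact iff_of_true (hVA₁ hxV) (hVA₂ hxV)
  rw [hiff₁ x hxD hxV, hiff₂ x hxD hxV]
  constructor
  · rintro ⟨u, w, huA, hwA, hne, hfu, hfw, hsum, huniq⟩
    have huD := hA₁D huA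
    have hwD := hA₁D hwA
    have hfu2 : f₂ u < f₂ x := by
      have := hmax₂ u huD w hwD; rw [hsum] at this
      exact lt_of_le_of_lt (le_max_left _ _) this
    have hfw2 : f₂ w < f₂ x := by
      have := hmax₂ u huD w hwD; rw [hsum] at this
      exact lt_of_le_of_lt (le_max_right _ _) this
    refine ⟨u, w, (IH u huD hfu).mp huA, (IH w hwD hfw).mp hwA, hne, hfu2, hfw2, hsum, ?_⟩
    intro u' w' hu' hw' hne' _ _ hsum'
    have hu'D := hA₂D hu'
    have hw'D := hA₂D hw'
    have hf1u' : f₁ u' < f₁ x := by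
      have := hmax₁ u' hu'D w' hw'D; rw [hsum'] at this
      exact lt_of_le_of_lt (le_max_left _ _) this
    have hf1w' : f₁ w' < f₁ x := by
      have := hmax₁ u' hu'D w' hw'D; rw [hsum'] at this
      exact lt_of_le_of_lt (le_max_right _ _) this
    exact huniq u' w' ((IH u' hu'D hf1u').mpr hu') ((IH w' hw'D hf1w').mpr hw')
      hne' hf1u' hf1w' hsum'
  · rintro ⟨u, w, huA, hwA, hne, hfu, hfw, hsum, huniq⟩
    have huD := hA₂D huA
    have hwD := hA₂D hwA
    have hfu1 : f₁ u < f₁ x := by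
      have := hmax₁ u huD w hwD; rw [hsum] at this
      exact lt_of_le_of_lt (le_max_left _ _) this
    have hfw1 : f₁ w < f₁ x := by
      have := hmax₁ u huD w hwD; rw [hsum] at this
      exact lt_of_le_of_lt (le_max_right _ _) this
    refine ⟨u, w, (IH u huD hfu1).mpr huA, (IH w hwD hfw1).mpr hwA, hne, hfu1, hfw1, hsum, ?_⟩
    intro u' w' hu' hw' hne' hf1u' hf1w' hsum'
    have hu'D := hA₁D hu'
    have hw'D := hA₁D hw'
    have hf2u' : f₂ u' < f₂ x := by
      have := hmax₂ u' hu'D w' hw'D; rw [hsum'] at this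
      exact lt_of_le_of_lt (le_max_left _ _) this
    have hf2w' : f₂ w' < f₂ x := by
      have := hmax₂ u' hu'D w' hw'D; rw [hsum'] at this
      exact lt_of_le_of_lt (le_max_right _ _) this
    exact huniq u' w' ((IH u' hu'D hf1u').mp hu') ((IH w' hw'D hf1w').mp hw')
      hne' hf2u' hf2w' hsum'

theorem stmt_5 {n k : ℕ} (v : Fin k → (Fin n → ℝ))
    (hv0 : ∀ i, v i ≠ 0) (hvnn : ∀ i j, 0 ≤ v i j)
    (D : Set (Fin n → ℝ))
    (hD : D = {x | ∃ a : Fin k → ℕ, a ≠ 0 ∧ x = ∑ i, a i • v i})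
    (f₁ f₂ : (Fin n → ℝ) → ℝ)
    (hadm₁ : (∀ u ∈ D, ∀ w ∈ D, max (f₁ u) (f₁ w) < f₁ (u + w)) ∧
      ∀ x : ℝ, {y ∈ D | f₁ y < x}.Finite)
    (hadm₂ : (∀ u ∈ D, ∀ w ∈ D, max (f₂ u) (f₂ w) < f₂ (u + w)) ∧
      ∀ x : ℝ, {y ∈ D | f₂ y < x}.Finite)
    (A₁ A₂ : Set (Fin n → ℝ))
    (h₁ : IsFUlamSet D (Set.range v) f₁ A₁)
    (h₂ : IsFUlamSet D (Set.range v) f₂ A₂) :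
    A₁ = A₂ := by
  have hfin₁ := hadm₁.2
  have key : ∀ N : ℕ, ∀ x ∈ D, ({y ∈ D | f₁ y < f₁ x}).ncard ≤ N → (x ∈ A₁ ↔ x ∈ A₂) := by
    intro N
    induction N using Nat.strong_induction_on with
    | _ N ihN =>
      intro x hxD hcard
      refine ulam_step hadm₁.1 hadm₂.1 h₁ h₂ hxD ?_
      intro y hyD hfy
      have hsub : {z ∈ D | f₁ z < f₁ y} ⊂ {z ∈ D | f₁ z < f₁ x} := by
        constructor
        · intro z hz
          exact ⟨hz.1, hz.2.trans hfy⟩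
        · intro hcontra
          exact absurd (hcontra ⟨hyD, hfy⟩).2 (lt_irrefl _)
      have hlt : ({z ∈ D | f₁ z < f₁ y}).ncard < ({z ∈ D | f₁ z < f₁ x}).ncard :=
        Set.ncard_lt_ncard hsub (hfin₁ (f₁ x))
      exact ihN _ (lt_of_lt_of_le hlt hcard) y hyD le_rfl
  ext x
  by_cases hxD : x ∈ D
  · exact key _ x hxD le_rfl
  · exact iff_of_false (fun h => hxD (h₁.1 h)) (fun h => hxD (h₂.1 h))
end

section
/- Let x : ℕ → {0,1,2} be a sequence, and define T(x) : ℕ → {0,1} by T(x)₀ = 1 if x₀ = 1 and T(x)₀ = 0 otherwise, and for i ≥ 1, T(x)ᵢ = 1 if xᵢ + T(x)ᵢ₋₁ = 1 and T(x)ᵢ = 0 otherwise. If x is eventually periodic with period p ≥ 1 (i.e., x_{j+p} = x_j for all sufficiently large j), then T(x) is eventually periodic with period p or 2p; in particular, T(x)_{j+2p} = T(x)_j for all sufficiently large j. -/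
/-- The map `T` on sequences over `{0,1,2}`: `T(x)₀ = 1` iff `x₀ = 1`, and for `i ≥ 1`,
`T(x)ᵢ = 1` iff `xᵢ + T(x)ᵢ₋₁ = 1` (and `0` otherwise). -/
def Tmap (x : ℕ → ℕ) : ℕ → ℕ
  | 0 => if x 0 = 1 then 1 else 0
  | i + 1 => if x (i + 1) + Tmap x i = 1 then 1 else 0

lemma Tmap_le_one (x : ℕ → ℕ) (i : ℕ) : Tmap x i ≤ 1 := by
  cases i <;> simp only [Tmap] <;> split <;> simp

lemma Tmap_prop (x : ℕ → ℕ) (q m : ℕ) (hxq : ∀ j, m ≤ j → x (j + q) = x j)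
    (j₀ : ℕ) (hm : m ≤ j₀) (h0 : Tmap x (j₀ + q) = Tmap x j₀) :
    ∀ j, j₀ ≤ j → Tmap x (j + q) = Tmap x j := by
  intro j hj
  induction j, hj using Nat.le_induction with
  | base => exact h0
  | succ j hj ih =>
    have h1 : j + 1 + q = (j + q) + 1 := by omega
    rw [h1]
    show (if x ((j + q) + 1) + Tmap x (j + q) = 1 then 1 else 0) =
      (if x (j + 1) + Tmap x j = 1 then 1 else 0)
    have h2 : x ((j + q) + 1) = x (j + 1) := by
      have := hxq (j + 1) (by omega)
      rw [show (j + 1) + q = (j + q) + 1 by omega] at this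
      exact this
    rw [h2, ih]

theorem stmt_10 (x : ℕ → ℕ) (hx : ∀ i, x i ≤ 2) (p : ℕ) (hp : 1 ≤ p)
    (hper : ∃ m, ∀ j, m ≤ j → x (j + p) = x j) :
    ((∃ M, ∀ j, M ≤ j → Tmap x (j + p) = Tmap x j) ∨
      (∃ M, ∀ j, M ≤ j → Tmap x (j + 2 * p) = Tmap x j)) ∧
    (∃ M, ∀ j, M ≤ j → Tmap x (j + 2 * p) = Tmap x j) := by
  obtain ⟨m, hm⟩ := hper
  have hx2p : ∀ j, m ≤ j → x (j + 2 * p) = x j := by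
    intro j hj
    have h1 := hm (j + p) (by omega)
    have h2 := hm j hj
    rw [show j + 2 * p = (j + p) + p by omega, h1, h2]
  -- helper: if T has period p from some point, then it has period 2p
  have pto2p : (∃ M, ∀ j, M ≤ j → Tmap x (j + p) = Tmap x j) →
      (∃ M, ∀ j, M ≤ j → Tmap x (j + 2 * p) = Tmap x j) := by
    rintro ⟨M, hM⟩
    refine ⟨M, fun j hj => ?_⟩
    have h1 := hM (j + p) (by omega)
    have h2 := hM j hj
    rw [show j + 2 * p = (j + p) + p by omega, h1, h2]
  by_cases h01 : Tmap x (m + p) = Tmap x m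
  · have hP : ∃ M, ∀ j, M ≤ j → Tmap x (j + p) = Tmap x j :=
      ⟨m, Tmap_prop x p m hm m le_rfl h01⟩
    exact ⟨Or.inl hP, pto2p hP⟩
  · by_cases h12 : Tmap x (m + 2 * p) = Tmap x (m + p)
    · have h01' : Tmap x ((m + p) + p) = Tmap x (m + p) := by
        rw [show (m + p) + p = m + 2 * p by omega]; exact h12
      have hP : ∃ M, ∀ j, M ≤ j → Tmap x (j + p) = Tmap x j :=
        ⟨m + p, Tmap_prop x p m hm (m + p) (by omega) h01'⟩
      exact ⟨Or.inl hP, pto2p hP⟩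
    · have h02 : Tmap x (m + 2 * p) = Tmap x m := by
        have a := Tmap_le_one x m
        have b := Tmap_le_one x (m + p)
        have c := Tmap_le_one x (m + 2 * p)
        omega
      have hP : ∃ M, ∀ j, M ≤ j → Tmap x (j + 2 * p) = Tmap x j :=
        ⟨m, Tmap_prop x (2 * p) m hx2p m le_rfl h02⟩
      exact ⟨Or.inr hP, hP⟩
end

section
/- Let x : ℕ → {0,1,2} be a sequence satisfying x_{j+p} = x_j for all j ≥ m, where p ≥ 1, and let T(x) be defined by T(x)₀ = 1 if x₀ = 1 else 0, and T(x)ᵢ = 1 if xᵢ + T(x)ᵢ₋₁ = 1 else 0 for i ≥ 1. Then T(x) is eventually periodic with period 2p but not eventually periodic with period p if and only if the block x_m, x_{m+1}, …, x_{m+p−1} contains no symbol 2 and contains an odd number of symbols equal to 1. -/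
lemma Tmap_le (x : ℕ → ℕ) (i : ℕ) : Tmap x i = 0 ∨ Tmap x i = 1 := by
  cases i <;> (simp only [Tmap]; split <;> simp)

lemma Tmap_two (x : ℕ → ℕ) (n : ℕ) (h : x n = 2) : Tmap x n = 0 := by
  cases n with
  | zero => show (if x 0 = 1 then 1 else 0) = 0; rw [h]; simp
  | succ k =>
    show (if x (k+1) + Tmap x k = 1 then 1 else 0) = 0
    rw [h]; split <;> omega

lemma Tmap_step (x : ℕ → ℕ) (i : ℕ) (hx : x (i+1) ≤ 2) (h2 : x (i+1) ≠ 2) :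
    Tmap x (i+1) = (Tmap x i + x (i+1)) % 2 := by
  have hT := Tmap_le x i
  have hx01 : x (i+1) = 0 ∨ x (i+1) = 1 := by omega
  show (if x (i+1) + Tmap x i = 1 then 1 else 0) = (Tmap x i + x (i+1)) % 2
  rcases hT with h | h <;> rcases hx01 with h' | h' <;> rw [h, h'] <;> norm_num

lemma Tmap_stretch (x : ℕ → ℕ) (hx : ∀ i, x i ≤ 2) (a k : ℕ)
    (h2 : ∀ i < k, x (a + 1 + i) ≠ 2) :
    Tmap x (a + k) = (Tmap x a + ∑ i ∈ Finset.range k, x (a + 1 + i)) % 2 := by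
  induction k with
  | zero => rcases Tmap_le x a with h | h <;> simp [h]
  | succ k ih =>
    have ihh := ih (fun i hi => h2 i (by omega))
    have hne : x (a + k + 1) ≠ 2 := by
      have := h2 k (by omega)
      rwa [show a + 1 + k = a + k + 1 by omega] at this
    have hstep := Tmap_step x (a + k) (hx _) hne
    rw [show a + (k+1) = a + k + 1 by omega, hstep, ihh, Finset.sum_range_succ,
        show a + 1 + k = a + k + 1 by omega]
    omega

lemma Tmap_prop_s11 (x : ℕ → ℕ) (p m : ℕ) (hper : ∀ j, m ≤ j → x (j + p) = x j)
    (j0 : ℕ) (hj0 : m ≤ j0) (h : Tmap x (j0 + p) = Tmap x j0) :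
    ∀ j, j0 ≤ j → Tmap x (j + p) = Tmap x j := by
  intro j hj
  obtain ⟨k, rfl⟩ := Nat.exists_eq_add_of_le hj
  clear hj
  induction k with
  | zero => simpa using h
  | succ k ih =>
    have hxx : x (j0 + k + 1 + p) = x (j0 + k + 1) := hper _ (by omega)
    rw [show j0 + (k+1) + p = (j0 + k + p) + 1 by omega,
        show j0 + (k+1) = (j0 + k) + 1 by omega]
    show (if x (j0+k+p+1) + Tmap x (j0+k+p) = 1 then 1 else 0)
       = (if x (j0+k+1) + Tmap x (j0+k) = 1 then 1 else 0)
    rw [show j0+k+p+1 = j0+k+1+p by omega, hxx, ih]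

lemma x_ext (x : ℕ → ℕ) (p m : ℕ) (hp : 1 ≤ p)
    (hper : ∀ j, m ≤ j → x (j + p) = x j) :
    ∀ j, m ≤ j → x j = x (m + (j - m) % p) := by
  intro j
  induction j using Nat.strong_induction_on with
  | _ j ih =>
    intro hj
    by_cases h : j < m + p
    · rw [Nat.mod_eq_of_lt (by omega)]
      congr 1; omega
    · have h1 : x j = x (j - p) := by
        have := hper (j - p) (by omega)
        rwa [show j - p + p = j by omega] at this
      rw [h1, ih (j - p) (by omega) (by omega)]
      congr 2
      rw [show j - m = (j - p - m) + p by omega, Nat.add_mod_right]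

lemma no2_ext (x : ℕ → ℕ) (p m : ℕ) (hp : 1 ≤ p)
    (hper : ∀ j, m ≤ j → x (j + p) = x j) (hno2 : ∀ i < p, x (m + i) ≠ 2) :
    ∀ j, m ≤ j → x j ≠ 2 := by
  intro j hj
  rw [x_ext x p m hp hper j hj]
  exact hno2 _ (Nat.mod_lt _ (by omega))

lemma sum_shift (x : ℕ → ℕ) (p m : ℕ) (hp : 1 ≤ p)
    (hper : ∀ j, m ≤ j → x (j + p) = x j) :
    ∀ j, m ≤ j → ∑ i ∈ Finset.range p, x (j + i) = ∑ i ∈ Finset.range p, x (m + i) := by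
  intro j hj
  obtain ⟨k, rfl⟩ := Nat.exists_eq_add_of_le hj
  clear hj
  induction k with
  | zero => simp
  | succ k ih =>
    rw [← ih]
    obtain ⟨q, rfl⟩ : ∃ q, p = q + 1 := ⟨p - 1, by omega⟩
    rw [Finset.sum_range_succ, Finset.sum_range_succ']
    have hterm : ∀ i ∈ Finset.range q, x (m+(k+1)+i) = x (m+k+(i+1)) :=
      fun i _ => by congr 1; omega
    rw [Finset.sum_congr rfl hterm]
    have hx0 : x (m+(k+1)+q) = x (m+k+0) := by
      rw [show m+(k+1)+q = (m+k) + (q+1) by omega, hper (m+k) (by omega)]; rfl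
    rw [hx0]

lemma Tmap_rel (x : ℕ → ℕ) (hx : ∀ i, x i ≤ 2) (p m : ℕ) (hp : 1 ≤ p)
    (hper : ∀ j, m ≤ j → x (j + p) = x j) (hno2 : ∀ j, m ≤ j → x j ≠ 2) :
    ∀ j, m ≤ j →
      Tmap x (j + p) = (Tmap x j + ∑ i ∈ Finset.range p, x (m + i)) % 2 := by
  intro j hj
  rw [Tmap_stretch x hx j p (fun i _ => hno2 (j+1+i) (by omega)),
      sum_shift x p m hp hper (j+1) (by omega)]

lemma sum_eq_card (x : ℕ → ℕ) (hx : ∀ i, x i ≤ 2) (p m : ℕ)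
    (hno2 : ∀ i < p, x (m + i) ≠ 2) :
    ∑ i ∈ Finset.range p, x (m + i)
      = ((Finset.range p).filter fun i => x (m + i) = 1).card := by
  rw [Finset.card_filter]
  apply Finset.sum_congr rfl
  intro i hi
  have h1 := hx (m + i)
  have h2 := hno2 i (Finset.mem_range.mp hi)
  have h3 : x (m+i) = 0 ∨ x (m+i) = 1 := by omega
  rcases h3 with h | h <;> simp [h]

theorem stmt_11 (x : ℕ → ℕ) (hx : ∀ i, x i ≤ 2) (p m : ℕ) (hp : 1 ≤ p)
    (hper : ∀ j, m ≤ j → x (j + p) = x j) :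
    ((∃ M, ∀ j, M ≤ j → Tmap x (j + 2 * p) = Tmap x j) ∧
      ¬(∃ M, ∀ j, M ≤ j → Tmap x (j + p) = Tmap x j)) ↔
    ((∀ i < p, x (m + i) ≠ 2) ∧
      Odd (((Finset.range p).filter fun i => x (m + i) = 1).card)) := by
  constructor
  · rintro ⟨h2p, hnp⟩
    have hno2 : ∀ i < p, x (m + i) ≠ 2 := by
      intro i hip hxi
      apply hnp
      refine ⟨m + i, Tmap_prop_s11 x p m hper (m+i) (by omega) ?_⟩
      have e1 : Tmap x (m + i) = 0 := Tmap_two x _ hxi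
      have e2 : Tmap x (m + i + p) = 0 := Tmap_two x _ (by rw [hper (m+i) (by omega)]; exact hxi)
      rw [e1, e2]
    refine ⟨hno2, ?_⟩
    have hno2' := no2_ext x p m hp hper hno2
    by_contra hodd
    rw [Nat.not_odd_iff_even] at hodd
    apply hnp
    refine ⟨m, fun j hj => ?_⟩
    have hrel := Tmap_rel x hx p m hp hper hno2' j hj
    rw [← sum_eq_card x hx p m hno2] at hodd
    have hS : (∑ i ∈ Finset.range p, x (m + i)) % 2 = 0 := Nat.even_iff.mp hodd
    rcases Tmap_le x j with h | h <;> omega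
  · rintro ⟨hno2, hodd⟩
    have hno2' := no2_ext x p m hp hper hno2
    have hS : (∑ i ∈ Finset.range p, x (m + i)) % 2 = 1 := by
      rw [sum_eq_card x hx p m hno2]; exact Nat.odd_iff.mp hodd
    have hrel := Tmap_rel x hx p m hp hper hno2'
    constructor
    · refine ⟨m, fun j hj => ?_⟩
      have h1 := hrel j hj
      have h2 := hrel (j + p) (by omega)
      rw [show j + 2*p = j + p + p by ring, h2, h1]
      rcases Tmap_le x j with h | h <;> omega
    · rintro ⟨M, hM⟩
      have h1 := hrel (max M m) (le_max_right _ _)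
      have h2 := hM (max M m) (le_max_left _ _)
      rcases Tmap_le x (max M m) with h | h <;> omega
end

section
/- Let V be a finite set of nonzero vectors in ℝⁿ, all of whose coordinates are nonnegative, containing at least two elements. Then the Ulam set A(V) is infinite. -/
attribute [-instance] IsWellFounded.wellOrderExtension.isWellFounded_lt


theorem stmt_14 {n : ℕ} (V : Set (Fin n → ℝ)) (hfin : V.Finite)
    (hV : ∀ v ∈ V, v ≠ 0 ∧ ∀ i, 0 ≤ v i)
    (hcard : V.Nontrivial)
    (A : Set (Fin n → ℝ)) (hA : IsUlamSet V A) :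
    A.Infinite := by
  classical
  letI : IsOrderedCancelAddMonoid (Lex (Fin n → ℝ)) :=
    inferInstance
  obtain ⟨hVA, hiff⟩ := hA
  by_contra hinf
  rw [Set.not_infinite] at hinf
  -- Work in the lexicographic order
  let S : Finset (Lex (Fin n → ℝ)) := hinf.toFinset.map toLex.toEmbedding
  have hmemS : ∀ x : Fin n → ℝ, toLex x ∈ S ↔ x ∈ A := by
    intro x
    simp [S, Finset.mem_map_equiv, Set.Finite.mem_toFinset]
  -- every element of V is lex-positive
  have hpos : ∀ v ∈ V, (0 : Lex (Fin n → ℝ)) < toLex v := by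
    intro v hv
    obtain ⟨hne, hnn⟩ := hV v hv
    have hlt : (0 : Fin n → ℝ) < v := by
      refine lt_of_le_of_ne (fun i => hnn i) (Ne.symm hne)
    exact Pi.lex_lt_of_lt (wellFounded_lt) hlt
  obtain ⟨v1, hv1, v2, hv2, hv12⟩ := hcard
  have hSne : S.Nonempty := ⟨toLex v1, (hmemS v1).2 (hVA hv1)⟩
  set u : Lex (Fin n → ℝ) := S.max' hSne with hu_def
  have huS : u ∈ S := S.max'_mem hSne
  have hle_u : ∀ y ∈ S, y ≤ u := fun y hy => S.le_max' y hy
  -- second maximum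
  have hTne : (S.erase u).Nonempty := by
    rcases ne_or_eq (toLex v1) u with h | h
    · exact ⟨toLex v1, Finset.mem_erase.2 ⟨h, (hmemS v1).2 (hVA hv1)⟩⟩
    · refine ⟨toLex v2, Finset.mem_erase.2 ⟨?_, (hmemS v2).2 (hVA hv2)⟩⟩
      rw [← h]
      exact fun hc => hv12 (toLex.injective hc.symm)
  set w : Lex (Fin n → ℝ) := (S.erase u).max' hTne with hw_def
  have hwS : w ∈ S.erase u := (S.erase u).max'_mem hTne
  have hwu : w ≠ u := (Finset.mem_erase.1 hwS).1
  have hwS' : w ∈ S := (Finset.mem_erase.1 hwS).2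
  have hwlt : w < u := lt_of_le_of_ne (hle_u w hwS') hwu
  have hle_w : ∀ y ∈ S, y ≠ u → y ≤ w := fun y hy hyu =>
    (S.erase u).le_max' y (Finset.mem_erase.2 ⟨hyu, hy⟩)
  -- w is positive
  have hwpos : (0 : Lex (Fin n → ℝ)) < w := by
    rcases ne_or_eq (toLex v1) u with h | h
    · exact lt_of_lt_of_le (hpos v1 hv1) (hle_w _ ((hmemS v1).2 (hVA hv1)) h)
    · have h2 : toLex v2 ≠ u := by
        rw [← h]; exact fun hc => hv12 (toLex.injective hc.symm)
      exact lt_of_lt_of_le (hpos v2 hv2) (hle_w _ ((hmemS v2).2 (hVA hv2)) h2)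
  -- the candidate new element
  set x : Fin n → ℝ := ofLex u + ofLex w with hx_def
  have hxlex : toLex x = u + w := rfl
  have hult : u < toLex x := by
    rw [hxlex]
    simpa using add_lt_add_left hwpos u
  have hxA : toLex x ∉ S := fun hc => absurd (hle_u _ hc) (not_le.2 hult)
  have hxV : x ∉ V := fun hc => hxA ((hmemS x).2 (hVA hc))
  -- x has a unique representation
  have hrep : UlamUniqueRep A x := by
    refine ⟨ofLex u, ofLex w, (hmemS _).1 (by simpa using huS), (hmemS _).1 (by simpa using hwS'),
      fun hc => hwu (congrArg toLex hc).symm, rfl, ?_⟩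
    intro u' w' hu' hw' hne' hsum
    have ha : toLex u' ∈ S := (hmemS u').2 hu'
    have hb : toLex w' ∈ S := (hmemS w').2 hw'
    have hab : toLex u' + toLex w' = u + w := by
      have : toLex (u' + w') = toLex x := congrArg toLex hsum
      simpa [hxlex] using this
    rcases eq_or_ne (toLex u') u with h1 | h1
    · left
      have : toLex w' = w := by
        have := hab
        rw [h1] at this
        exact add_left_cancel this
      exact ⟨toLex.injective h1, toLex.injective this⟩
    · rcases eq_or_ne (toLex w') u with h2 | h2
      · right
        have : toLex u' = w := by
          have := hab
          rw [h2, add_comm] at this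
          exact add_left_cancel this
        exact ⟨toLex.injective this, toLex.injective h2⟩
      · exfalso
        have h1' : toLex u' ≤ w := hle_w _ ha h1
        have h2' : toLex w' ≤ w := hle_w _ hb h2
        have : toLex u' + toLex w' < u + w := by
          calc toLex u' + toLex w' ≤ w + w := add_le_add h1' h2'
            _ < u + w := add_lt_add_left hwlt w
        exact absurd hab (ne_of_lt this)
  have : x ∈ A := (hiff x hxV).2 hrep
  exact hxA ((hmemS x).2 this)
end
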